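/- Let N : (0, r₀] → ℝ be differentiable and satisfy N'(r) ≥ -2c·r·(1 + N(r)) for all r ∈ (0, r₀], with 1 + N(r) > 0 and c ≥ 0. Then for all 0 < s ≤ r ≤ r₀ one has 1 + N(s) ≤ e^{c(r²−s²)}·(1 + N(r)); in particular N(s) ≤ e^{c(r²−s²)}N(r) + (e^{c(r²−s²)} − 1). -/

import Mathlib

/-- almost monotonicity of the frequency function: if `N` is
differentiable on `(0, r₀]` with `N'(r) ≥ -2cr(1 + N(r))`, `1 + N(r) > 0` and `c ≥ 0`,
then for `0 < s ≤ r ≤ r₀` one has `1 + N(s) ≤ e^{c(r²−s²)}(1 + N(r))`, and in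
particular `N(s) ≤ e^{c(r²−s²)} N(r) + (e^{c(r²−s²)} − 1)`. -/
theorem stmt_9 (r₀ c : ℝ) (hr₀ : 0 < r₀) (hc : 0 ≤ c) (N N' : ℝ → ℝ)
    (hderiv : ∀ r ∈ Set.Ioc (0 : ℝ) r₀, HasDerivAt N (N' r) r)
    (hpos : ∀ r ∈ Set.Ioc (0 : ℝ) r₀, 0 < 1 + N r)
    (hineq : ∀ r ∈ Set.Ioc (0 : ℝ) r₀, -2 * c * r * (1 + N r) ≤ N' r) :
    ∀ s r : ℝ, 0 < s → s ≤ r → r ≤ r₀ →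
      1 + N s ≤ Real.exp (c * (r ^ 2 - s ^ 2)) * (1 + N r) ∧
      N s ≤ Real.exp (c * (r ^ 2 - s ^ 2)) * N r + (Real.exp (c * (r ^ 2 - s ^ 2)) - 1) := by
  intro s r hs hsr hrr₀
  set g : ℝ → ℝ := fun x => Real.exp (c * x ^ 2) * (1 + N x) with hg
  have hgderiv : ∀ x ∈ Set.Ioc (0 : ℝ) r₀,
      HasDerivAt g (Real.exp (c * x ^ 2) * (2 * c * x * (1 + N x) + N' x)) x := by
    intro x hx
    have h1 : HasDerivAt (fun x : ℝ => Real.exp (c * x ^ 2)) (Real.exp (c * x ^ 2) * (c * (2 * x))) x := by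
      have : HasDerivAt (fun x : ℝ => c * x ^ 2) (c * (2 * x)) x := by
        simpa using ((hasDerivAt_pow 2 x).const_mul c)
      exact this.exp
    have h2 : HasDerivAt (fun x => 1 + N x) (N' x) x := (hderiv x hx).const_add 1
    have : HasDerivAt (fun y => Real.exp (c * y ^ 2) * (1 + N y)) (Real.exp (c * x ^ 2) * (c * (2 * x)) * (1 + N x) + Real.exp (c * x ^ 2) * N' x) x := h1.mul h2
    convert this using 1
    ring
  have hmono : g s ≤ g r := by
    have hsub : Set.Icc s r ⊆ Set.Ioc (0 : ℝ) r₀ := fun x hx => ⟨lt_of_lt_of_le hs hx.1, le_trans hx.2 hrr₀⟩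
    have hcont : ContinuousOn g (Set.Icc s r) := fun x hx =>
      ((hgderiv x (hsub hx)).continuousAt).continuousWithinAt
    have hdiff : ∀ x ∈ interior (Set.Icc s r), HasDerivAt g (Real.exp (c * x ^ 2) * (2 * c * x * (1 + N x) + N' x)) x := by
      intro x hx
      rw [interior_Icc] at hx
      exact hgderiv x (hsub ⟨le_of_lt hx.1, le_of_lt hx.2⟩)
    have hmono' : MonotoneOn g (Set.Icc s r) := by
      apply monotoneOn_of_deriv_nonneg (convex_Icc s r) hcont
      · intro x hx
        exact (hdiff x hx).differentiableAt.differentiableWithinAt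
      · intro x hx
        rw [(hdiff x hx).deriv]
        rw [interior_Icc] at hx
        have hx' : x ∈ Set.Ioc (0 : ℝ) r₀ := hsub ⟨le_of_lt hx.1, le_of_lt hx.2⟩
        have h := hineq x hx'
        have h2 : 0 ≤ 2 * c * x * (1 + N x) + N' x := by linarith
        positivity
    exact hmono' (Set.left_mem_Icc.mpr hsr) (Set.right_mem_Icc.mpr hsr) hsr
  have hes : (0:ℝ) < Real.exp (c * s ^ 2) := Real.exp_pos _
  have key : 1 + N s ≤ Real.exp (c * (r ^ 2 - s ^ 2)) * (1 + N r) := by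
    have : Real.exp (c * s ^ 2) * (1 + N s) ≤ Real.exp (c * r ^ 2) * (1 + N r) := hmono
    have hexp : Real.exp (c * r ^ 2) = Real.exp (c * (r ^ 2 - s ^ 2)) * Real.exp (c * s ^ 2) := by
      rw [← Real.exp_add]; ring_nf
    rw [hexp] at this
    calc 1 + N s = (Real.exp (c * s ^ 2) * (1 + N s)) / Real.exp (c * s ^ 2) := by
          field_simp
      _ ≤ (Real.exp (c * (r ^ 2 - s ^ 2)) * Real.exp (c * s ^ 2) * (1 + N r)) / Real.exp (c * s ^ 2) := by
          apply div_le_div_of_nonneg_right ?_ hes.le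
          · linarith [mul_assoc (Real.exp (c * (r ^ 2 - s ^ 2))) (Real.exp (c * s ^ 2)) (1 + N r)]
      _ = Real.exp (c * (r ^ 2 - s ^ 2)) * (1 + N r) := by
          field_simp
  refine ⟨key, ?_⟩
  have : Real.exp (c * (r ^ 2 - s ^ 2)) * (1 + N r) = Real.exp (c * (r ^ 2 - s ^ 2)) * N r + (Real.exp (c * (r ^ 2 - s ^ 2)) - 1) + 1 := by ring
  linarith [key, this.ge]
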